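/- Let E be a complete Hausdorff locally convex space and φ : ℝ^d → E be a map such that (i) φ is smooth, (ii) for every continuous seminorm q on E and every sequence (t_j) increasing to infinity, sup_α sup_x q(D^α φ(x)/(T_α M_α)) < ∞, and (iii) for every ε > 0, (t_j), and continuous seminorm q, there is a compact K with q(D^α φ(x)/(T_α M_α)) ≤ ε for all α and x ∉ K. Then the set A = { D^α φ(x)/(T_α M_α) : x ∈ ℝ^d, α ∈ ℕ^d } is precompact in E. -/

import Mathlib

open Filter

noncomputable def prodSeq (t : ℕ → ℝ) (k : ℕ) : ℝ := ∏ j ∈ Finset.Icc 1 k, t j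

def msize {d : ℕ} (α : Fin d → ℕ) : ℕ := ∑ i, α i

def RClass (t : ℕ → ℝ) : Prop :=
  (∀ j, 0 < t j) ∧ Monotone t ∧ Tendsto t atTop atTop

/-- Let `E` be a complete Hausdorff locally convex space (topology generated by a family
of seminorms) and let `Φ α x` represent the derivatives `D^α φ(x)` of a smooth `E`-valued
function `φ` satisfying the `Ḃ^{M_p}(ℝ^d; E)` bounds: uniform seminorm-boundedness of
`D^α φ(x)/(T_α M_α)` and uniform seminorm-vanishing at infinity, for every continuous
seminorm and every `(t_j) ∈ 𝔑`. Then the set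
`A = {D^α φ(x)/(T_α M_α) : x ∈ ℝ^d, α ∈ ℕ^d}` (for a fixed `(t_j) ∈ 𝔑`) is precompact
(totally bounded) in `E`. -/
theorem derivative_set_totallyBounded
    {d : ℕ} {E : Type*} [AddCommGroup E] [Module ℝ E] [UniformSpace E]
    [IsUniformAddGroup E] [ContinuousSMul ℝ E] [CompleteSpace E] [T2Space E]
    [LocallyConvexSpace ℝ E]
    {ι : Type*} [Nonempty ι] (q : ι → Seminorm ℝ E) (hq : WithSeminorms q)
    (M : ℕ → ℝ) (hM : ∀ p, 0 < M p)
    (t₀ : ℕ → ℝ) (ht₀ : RClass t₀)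
    (φ : EuclideanSpace ℝ (Fin d) → E)
    (Φ : (Fin d → ℕ) → EuclideanSpace ℝ (Fin d) → E)
    (hΦ0 : Φ 0 = φ) (hΦcont : ∀ α, Continuous (Φ α))
    (hbdd : ∀ p : Seminorm ℝ E, Continuous ⇑p → ∀ t : ℕ → ℝ, RClass t →
      ∃ C : ℝ, ∀ (α : Fin d → ℕ) x,
        p ((prodSeq t (msize α) * M (msize α))⁻¹ • Φ α x) ≤ C)
    (hvanish : ∀ p : Seminorm ℝ E, Continuous ⇑p → ∀ t : ℕ → ℝ, RClass t →
      ∀ ε > (0 : ℝ), ∃ K : Set (EuclideanSpace ℝ (Fin d)), IsCompact K ∧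
        ∀ α : Fin d → ℕ, ∀ x ∉ K,
          p ((prodSeq t (msize α) * M (msize α))⁻¹ • Φ α x) ≤ ε) :
    TotallyBounded {e : E | ∃ (α : Fin d → ℕ) (x : EuclideanSpace ℝ (Fin d)),
      e = (prodSeq t₀ (msize α) * M (msize α))⁻¹ • Φ α x} := by
  rw [totallyBounded_iff_subset_finite_iUnion_nhds_zero]
  intro U hU
  obtain ⟨F, r, hr, hball⟩ := (hq.mem_nhds_iff 0 U).mp hU
  set p : Seminorm ℝ E := F.sup q with hp
  have hpc : Continuous ⇑p :=
    Seminorm.continuous (r := r) (hq.hasBasis_ball.mem_of_mem (i := (F, r)) hr)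
  -- the halved sequence
  set s : ℕ → ℝ := fun j => t₀ j / 2 with hs_def
  have hs : RClass s := by
    refine ⟨fun j => half_pos (ht₀.1 j), ?_, ?_⟩
    · exact ht₀.2.1.div_const (by norm_num)
    · exact ht₀.2.2.atTop_div_const (by norm_num)
  obtain ⟨C, hC⟩ := hbdd p hpc s hs
  have hC0 : 0 ≤ C := (apply_nonneg p _).trans (hC 0 0)
  have hprod : ∀ k, prodSeq t₀ k = 2 ^ k * prodSeq s k := by
    intro k
    simp only [prodSeq, hs_def]
    rw [Finset.prod_div_distrib, Finset.prod_const, Nat.card_Icc]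
    have h2 : (0:ℝ) < 2 ^ (k + 1 - 1) := by positivity
    field_simp
    simp
  -- key bound for large |α|
  have hkey : ∀ (α : Fin d → ℕ) x,
      p ((prodSeq t₀ (msize α) * M (msize α))⁻¹ • Φ α x) ≤ ((2:ℝ) ^ msize α)⁻¹ * C := by
    intro α x
    set k := msize α
    have h2k : ((2:ℝ) ^ k) ≠ 0 := by positivity
    have : (prodSeq t₀ k * M k)⁻¹ • Φ α x
        = ((2:ℝ) ^ k)⁻¹ • ((prodSeq s k * M k)⁻¹ • Φ α x) := by
      rw [smul_smul, ← mul_inv, ← mul_assoc, ← hprod]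
    rw [this, map_smul_eq_mul]
    have : ‖((2:ℝ)^k)⁻¹‖ = ((2:ℝ)^k)⁻¹ := by
      rw [Real.norm_eq_abs, abs_of_pos (by positivity)]
    rw [this]
    exact mul_le_mul_of_nonneg_left (hC α x) (by positivity)
  obtain ⟨N, hN⟩ := pow_unbounded_of_one_lt (C / r) (y := (2:ℝ)) one_lt_two
  -- vanishing at infinity
  obtain ⟨K, hKcomp, hK⟩ := hvanish p hpc t₀ ht₀ (r / 2) (half_pos hr)
  -- the compact core
  set S : Set (Fin d → ℕ) := {α | msize α < N} with hS_def
  have hSfin : S.Finite := by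
    refine Set.Finite.subset (Set.Finite.pi (fun i : Fin d => Set.finite_Iio N)) ?_
    intro α hα
    intro i _
    exact lt_of_le_of_lt
      (Finset.single_le_sum (f := α) (fun j _ => Nat.zero_le _) (Finset.mem_univ i)) hα
  set B : Set E := ⋃ α ∈ S,
    (fun x => (prodSeq t₀ (msize α) * M (msize α))⁻¹ • Φ α x) '' K with hB_def
  have hBcomp : IsCompact B :=
    hSfin.isCompact_biUnion (fun α _ => hKcomp.image ((hΦcont α).const_smul _))
  obtain ⟨t₁, ht₁fin, ht₁⟩ :=
    totallyBounded_iff_subset_finite_iUnion_nhds_zero.mp hBcomp.totallyBounded U hU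
  refine ⟨insert 0 t₁, ht₁fin.insert 0, ?_⟩
  rintro e ⟨α, x, rfl⟩
  by_cases hcase : msize α < N ∧ x ∈ K
  · have : (prodSeq t₀ (msize α) * M (msize α))⁻¹ • Φ α x ∈ B := by
      exact Set.mem_biUnion hcase.1 ⟨x, hcase.2, rfl⟩
    exact Set.biUnion_subset_biUnion_left (Set.subset_insert 0 t₁) (ht₁ this)
  · -- small element: in 0 +ᵥ U
    have hsmall : p ((prodSeq t₀ (msize α) * M (msize α))⁻¹ • Φ α x) < r := by
      rcases not_and_or.mp hcase with h | h
      · push_neg at h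
        calc p _ ≤ ((2:ℝ) ^ msize α)⁻¹ * C := hkey α x
          _ < r := by
            rw [inv_mul_lt_iff₀ (by positivity)]
            calc C = (C / r) * r := by field_simp
              _ < 2 ^ N * r := by
                exact mul_lt_mul_of_pos_right hN hr
              _ ≤ 2 ^ msize α * r := by
                have : (2:ℝ) ^ N ≤ 2 ^ msize α := pow_le_pow_right₀ (by norm_num) h
                exact mul_le_mul_of_nonneg_right this hr.le
      · exact lt_of_le_of_lt (hK α x h) (half_lt_self hr)
    have : (prodSeq t₀ (msize α) * M (msize α))⁻¹ • Φ α x ∈ U := by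
      apply hball
      rwa [Seminorm.mem_ball_zero]
    refine Set.mem_biUnion (Set.mem_insert 0 t₁) ?_
    rw [Set.mem_vadd_set]
    exact ⟨_, this, zero_vadd _ _⟩
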